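/- Let s ≥ 0. There exists a constant C_s > 0 such that for every δ > 0 and every square-summable sequence a : ℤ → ℂ, ( ∑_{n∈ℤ, n≠0} ⟨n⟩^{2s} |n(coth(δn) − sgn(n))|² |a(n)|² )^{1/2} ≤ C_s · δ^{−1} · (1 + δ^{−s}) · ( ∑_{n∈ℤ} |a(n)|² )^{1/2}. Equivalently, for every f ∈ L²(𝕋), writing f̂(n) for its Fourier coefficients, the operator Q_δ with Fourier multiplier symbol q_δ(n) = n(coth(δn) − sgn(n)) for n ≠ 0 and q_δ(0) = 0 satisfies ( ∑_{n∈ℤ} ⟨n⟩^{2s} |q_δ(n) f̂(n)|² )^{1/2} ≤ C_s · δ^{−1} · (1 + δ^{−s}) · ( ∑_{n∈ℤ} |f̂(n)|² )^{1/2}. -/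

import Mathlib

/-- The hyperbolic cotangent `coth x = (eˣ + e⁻ˣ)/(eˣ − e⁻ˣ)`, for `x ≠ 0`. -/
noncomputable def cothR (x : ℝ) : ℝ :=
  (Real.exp x + Real.exp (-x)) / (Real.exp x - Real.exp (-x))

/-- The symbol `q_δ(n) = n (coth(δn) − sgn n)` of the operator `Q_δ = (T_δ − H)∂ₓ`,
with the convention `q_δ(0) = 0`. -/
noncomputable def qSym (δ : ℝ) (n : ℤ) : ℝ :=
  if n = 0 then 0 else (n : ℝ) * (cothR (δ * n) - Real.sign n)

/-- The `n`-th Fourier coefficient of a (2π-periodic) function `f : ℝ → ℂ`: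
`f̂(n) = (2π)⁻¹ ∫_0^{2π} e^{−inx} f(x) dx`. -/
noncomputable def fCoef (f : ℝ → ℂ) (n : ℤ) : ℂ :=
  (1 / (2 * (Real.pi : ℂ))) * ∫ x in (0 : ℝ)..(2 * Real.pi), Complex.exp (-Complex.I * n * x) * f x



lemma cothR_sub_one {x : ℝ} (hx : 0 < x) :
    cothR x - 1 = 2 / (Real.exp (2 * x) - 1) := by
  have h1 : Real.exp (-x) < Real.exp x := Real.exp_lt_exp.mpr (by linarith)
  have h2 : (1 : ℝ) < Real.exp (2 * x) := by
    rw [← Real.exp_zero]; exact Real.exp_lt_exp.mpr (by linarith)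
  have hx1 : Real.exp x ≠ 0 := (Real.exp_pos x).ne'
  rw [cothR, div_sub_one (by linarith), div_eq_div_iff (by linarith) (by linarith)]
  have : Real.exp (2 * x) = Real.exp x * Real.exp x := by
    rw [← Real.exp_add]; ring_nf
  have hinv : Real.exp (-x) = (Real.exp x)⁻¹ := Real.exp_neg x
  field_simp [this, hinv]
  ring_nf
  have hh : Real.exp (-x) * Real.exp (x * 2) = Real.exp x := by
    rw [← Real.exp_add]; ring_nf
  linear_combination 2 * hh

lemma cothR_neg (x : ℝ) : cothR (-x) = -cothR x := by
  simp only [cothR, neg_neg]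
  rw [← div_neg, neg_sub]
  ring_nf

lemma exp_sub_one_ge (m : ℕ) (hm : 1 ≤ m) {x : ℝ} (hx : 0 < x) {t : ℝ} (ht : 1 ≤ t)
    (htm : t ≤ m) : x ^ t ≤ (m.factorial : ℝ) * (Real.exp x - 1) := by
  rcases le_or_gt 1 x with h1 | h1
  · have h2 : x ^ t ≤ x ^ (m : ℝ) := Real.rpow_le_rpow_of_exponent_le h1 htm
    have h3 : x ^ (m : ℝ) = x ^ m := Real.rpow_natCast x m
    have h4 : x ^ m / (m.factorial : ℝ) ≤ Real.exp x - 1 := by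
      have h5 := Real.sum_le_exp_of_nonneg hx.le (m + 1)
      have h6 : (1 : ℝ) + x ^ m / (m.factorial : ℝ) ≤
          ∑ i ∈ Finset.range (m + 1), x ^ i / (i.factorial : ℝ) := by
        have hsub : ({0, m} : Finset ℕ) ⊆ Finset.range (m + 1) := by
          intro i hi; simp at hi; rcases hi with rfl | rfl <;> simp [Nat.lt_succ_iff]
        calc (1 : ℝ) + x ^ m / m.factorial
            = ∑ i ∈ ({0, m} : Finset ℕ), x ^ i / (i.factorial : ℝ) := by
              rw [Finset.sum_pair (by omega : (0:ℕ) ≠ m)]; simp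
          _ ≤ _ := Finset.sum_le_sum_of_subset_of_nonneg hsub fun i _ _ => by positivity
      linarith
    have hfac : (0:ℝ) < m.factorial := by positivity
    calc x ^ t ≤ x ^ m := by rw [← h3]; exact h2
      _ ≤ (m.factorial : ℝ) * (Real.exp x - 1) := by
          rw [div_le_iff₀ hfac] at h4; linarith [h4]
  · have h2 : x ^ t ≤ x ^ (1:ℝ) := Real.rpow_le_rpow_of_exponent_ge hx h1.le ht
    have h3 : x ≤ Real.exp x - 1 := by linarith [Real.add_one_le_exp x]
    have hfac : (1:ℝ) ≤ m.factorial := by exact_mod_cast Nat.one_le_iff_ne_zero.mpr m.factorial_ne_zero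
    calc x ^ t ≤ x := by rwa [Real.rpow_one] at h2
      _ ≤ 1 * (Real.exp x - 1) := by linarith
      _ ≤ (m.factorial : ℝ) * (Real.exp x - 1) := by nlinarith


lemma qSym_neg (δ : ℝ) (n : ℤ) : qSym δ (-n) = qSym δ n := by
  unfold qSym
  rcases eq_or_ne n 0 with rfl | hn
  · simp
  · simp only [neg_eq_zero, hn, if_false]
    push_cast
    rw [mul_neg, cothR_neg, Real.sign_neg]
    ring

lemma pt_bound (s : ℝ) (hs : 0 ≤ s) {δ : ℝ} (hδ : 0 < δ) (n : ℤ) :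
    (1 + (n : ℝ) ^ 2) ^ s * qSym δ n ^ 2 ≤
      (((Nat.ceil s + 1 : ℕ).factorial : ℝ) * δ⁻¹ * (1 + δ ^ (-s))) ^ 2 := by
  set m : ℕ := Nat.ceil s + 1 with hm
  set C : ℝ := (m.factorial : ℝ) with hC
  have hC1 : (1:ℝ) ≤ C := by
    rw [hC]; exact_mod_cast Nat.one_le_iff_ne_zero.mpr m.factorial_ne_zero
  have hδs : (0:ℝ) < δ ^ (-s) := Real.rpow_pos_of_pos hδ _
  have hB : (0:ℝ) < C * δ⁻¹ * (1 + δ ^ (-s)) := by positivity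
  suffices key : ∀ k : ℤ, 0 < k →
      (1 + (k : ℝ) ^ 2) ^ s * qSym δ k ^ 2 ≤ (C * δ⁻¹ * (1 + δ ^ (-s))) ^ 2 by
    rcases lt_trichotomy n 0 with h | rfl | h
    · have h2 : ((-n : ℤ) : ℝ) ^ 2 = (n : ℝ) ^ 2 := by push_cast; ring
      rw [← h2, ← qSym_neg δ n]
      exact key (-n) (by omega)
    · simp [qSym]
      positivity
    · exact key n h
  intro k hk
  have hN : (1:ℝ) ≤ (k:ℝ) := by exact_mod_cast hk
  set N : ℝ := (k : ℝ) with hNdef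
  have hN0 : (0:ℝ) < N := by linarith
  have hsgn : Real.sign N = 1 := Real.sign_of_pos hN0
  have hq : qSym δ k = N * (2 / (Real.exp (2 * (δ * N)) - 1)) := by
    rw [qSym, if_neg (by omega), hsgn, cothR_sub_one (by positivity)]
  set E : ℝ := Real.exp (2 * (δ * N)) - 1 with hE
  have hE0 : (0:ℝ) < E := by
    have : (1:ℝ) < Real.exp (2 * (δ * N)) := by
      rw [← Real.exp_zero]
      exact Real.exp_lt_exp.mpr (by positivity)
    simp only [hE]; linarith
  have hkey : (2 * δ) ^ (s + 1) * N ^ (s + 1) ≤ C * E := by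
    have hcm : s + 1 ≤ (m : ℝ) := by
      push_cast [hm]
      linarith [Nat.le_ceil s]
    have h1 : (2 * (δ * N)) ^ (s + 1) ≤ C * E :=
      exp_sub_one_ge m (by omega) (x := 2 * (δ * N)) (by positivity)
        (t := s + 1) (by linarith) hcm
    rw [← mul_assoc] at h1
    rwa [Real.mul_rpow (by positivity) (by positivity)] at h1
  set G : ℝ := (1 + N ^ 2) ^ (s / 2) * (N * (2 / E)) with hG
  have hG0 : 0 ≤ G := by positivity
  have hpow : ((1 + N ^ 2) ^ (s / 2)) ^ 2 = (1 + N ^ 2) ^ s := by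
    rw [← Real.rpow_natCast ((1 + N ^ 2) ^ (s / 2)) 2,
      ← Real.rpow_mul (by positivity : (0:ℝ) ≤ 1 + N ^ 2)]
    congr 1
    push_cast
    ring
  have hsq : (1 + N ^ 2) ^ s * qSym δ k ^ 2 = G ^ 2 := by
    rw [hq, hG]
    conv_rhs => rw [mul_pow, hpow]
  rw [hsq]
  refine pow_le_pow_left₀ hG0 ?_ 2
  have step1 : (1 + N ^ 2) ^ (s / 2) ≤ 2 ^ (s / 2) * N ^ s := by
    have h1 : (1 + N ^ 2) ^ (s / 2) ≤ (2 * N ^ 2) ^ (s / 2) :=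
      Real.rpow_le_rpow (by positivity) (by nlinarith) (by positivity)
    have h2 : ((2 : ℝ) * N ^ 2) ^ (s / 2) = 2 ^ (s / 2) * N ^ s := by
      rw [Real.mul_rpow (by norm_num) (by positivity), ← Real.rpow_natCast N 2,
        ← Real.rpow_mul hN0.le]
      congr 1
      push_cast
      ring
    linarith [h1.trans_eq h2]
  calc G ≤ (2 ^ (s / 2) * N ^ s) * (N * (2 / E)) := by
          exact mul_le_mul_of_nonneg_right step1 (by positivity)
    _ = 2 ^ (s / 2 + 1) * N ^ (s + 1) / E := by
          rw [Real.rpow_add_one hN0.ne' s, Real.rpow_add_one (two_ne_zero) (s/2)]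
          ring
    _ ≤ 2 ^ (s / 2 + 1) * (C * E / (2 * δ) ^ (s + 1)) / E := by
          gcongr
          rw [le_div_iff₀ (by positivity), mul_comm]
          exact hkey
    _ = C * (2 ^ (s / 2 + 1) / (2 * δ) ^ (s + 1)) := by
          field_simp
    _ = C * (2 ^ (-(s / 2)) * (δ ^ (s + 1))⁻¹) := by
          congr 1
          rw [Real.mul_rpow (by norm_num) hδ.le]
          have e : (2:ℝ) ^ (s / 2 + 1) = 2 ^ (-(s / 2)) * 2 ^ (s + 1) := by
            rw [← Real.rpow_add two_pos]
            congr 1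
            ring
          rw [e, mul_div_assoc]
          congr 1
          rw [div_eq_mul_inv, mul_inv, ← mul_assoc,
            mul_inv_cancel₀ (by positivity : ((2:ℝ) ^ (s+1)) ≠ 0), one_mul]
    _ ≤ C * (1 * (δ⁻¹ * δ ^ (-s))) := by
          have e1 : (2:ℝ) ^ (-(s / 2)) ≤ 1 :=
            Real.rpow_le_one_of_one_le_of_nonpos (by norm_num) (by linarith)
          have e2 : (δ ^ (s + 1))⁻¹ = δ⁻¹ * δ ^ (-s) := by
            rw [← Real.rpow_neg hδ.le, ← Real.rpow_neg_one δ, ← Real.rpow_add hδ]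
            ring_nf
          rw [e2]
          gcongr
    _ ≤ C * δ⁻¹ * (1 + δ ^ (-s)) := by nlinarith

lemma part1 (s : ℝ) (hs : 0 ≤ s) {δ : ℝ} (hδ : 0 < δ) (a : ℤ → ℂ)
    (ha : Summable fun n : ℤ => ‖a n‖ ^ 2) :
    (∑' n : ℤ, (1 + (n : ℝ) ^ 2) ^ s * qSym δ n ^ 2 * ‖a n‖ ^ 2) ^ ((1:ℝ)/2) ≤
      ((Nat.ceil s + 1 : ℕ).factorial : ℝ) * δ⁻¹ * (1 + δ ^ (-s)) *
        (∑' n : ℤ, ‖a n‖ ^ 2) ^ ((1:ℝ)/2) := by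
  set B := ((Nat.ceil s + 1 : ℕ).factorial : ℝ) * δ⁻¹ * (1 + δ ^ (-s)) with hBdef
  have hfac : (0:ℝ) < ((Nat.ceil s + 1 : ℕ).factorial : ℝ) := by positivity
  have hδs : (0:ℝ) < δ ^ (-s) := Real.rpow_pos_of_pos hδ _
  have hB : 0 < B := by positivity
  have hle : ∀ n : ℤ, (1 + (n : ℝ) ^ 2) ^ s * qSym δ n ^ 2 * ‖a n‖ ^ 2
      ≤ B ^ 2 * ‖a n‖ ^ 2 :=
    fun n => mul_le_mul_of_nonneg_right (pt_bound s hs hδ n) (by positivity)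
  have hnonneg : ∀ n : ℤ, 0 ≤ (1 + (n : ℝ) ^ 2) ^ s * qSym δ n ^ 2 * ‖a n‖ ^ 2 := by
    intro n
    have h0 : (0:ℝ) ≤ (1 + (n:ℝ)^2) ^ s := Real.rpow_nonneg (by positivity) _
    positivity
  have hs2 : Summable fun n : ℤ => B ^ 2 * ‖a n‖ ^ 2 := ha.mul_left _
  have hs1 : Summable fun n : ℤ => (1 + (n : ℝ) ^ 2) ^ s * qSym δ n ^ 2 * ‖a n‖ ^ 2 :=
    Summable.of_nonneg_of_le hnonneg hle hs2
  have htsum : (∑' n : ℤ, (1 + (n : ℝ) ^ 2) ^ s * qSym δ n ^ 2 * ‖a n‖ ^ 2)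
      ≤ B ^ 2 * ∑' n : ℤ, ‖a n‖ ^ 2 := by
    rw [← tsum_mul_left]
    exact hs1.tsum_le_tsum hle hs2
  have hS0 : (0:ℝ) ≤ ∑' n : ℤ, ‖a n‖ ^ 2 := tsum_nonneg fun n => by positivity
  calc (∑' n : ℤ, (1 + (n : ℝ) ^ 2) ^ s * qSym δ n ^ 2 * ‖a n‖ ^ 2) ^ ((1:ℝ)/2)
      ≤ (B ^ 2 * ∑' n : ℤ, ‖a n‖ ^ 2) ^ ((1:ℝ)/2) :=
        Real.rpow_le_rpow (tsum_nonneg hnonneg) htsum (by norm_num)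
    _ = B * (∑' n : ℤ, ‖a n‖ ^ 2) ^ ((1:ℝ)/2) := by
        rw [Real.mul_rpow (by positivity) hS0]
        congr 1
        rw [← Real.rpow_natCast B 2, ← Real.rpow_mul hB.le]
        norm_num


open MeasureTheory in
lemma fCoef_summable {f : ℝ → ℂ}
    (hf : MemLp f 2 (volume.restrict (Set.Ioc (0:ℝ) (2*Real.pi)))) :
    Summable fun n : ℤ => ‖fCoef f n‖ ^ 2 := by
  have hπ : (0:ℝ) < Real.pi := Real.pi_pos
  set μ := volume.restrict (Set.Ioc (0:ℝ) (2*Real.pi)) with hμ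
  haveI : IsFiniteMeasure μ := by
    constructor
    rw [hμ, Measure.restrict_apply_univ, Real.volume_Ioc]
    exact ENNReal.ofReal_lt_top
  set e : ℤ → ℝ → ℂ := fun n x => Complex.exp (Complex.I * n * x) with he
  have mem_e : ∀ n : ℤ, MemLp (e n) 2 μ := by
    intro n
    refine MemLp.of_bound
      ((Complex.continuous_exp.comp
        ((continuous_const.mul Complex.continuous_ofReal))).aestronglyMeasurable) 1 ?_
    filter_upwards with x
    have hre : (Complex.I * n * x).re = 0 := by simp
    rw [he]
    simp only [Complex.norm_exp, hre, Real.exp_zero, le_refl]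
  set W : ℤ → Lp ℂ 2 μ := fun n => (mem_e n).toLp (e n) with hW
  set F : Lp ℂ 2 μ := hf.toLp f with hF
  have hWF : ∀ n : ℤ, @inner ℂ _ _ (W n) F
      = ∫ x, (starRingEnd ℂ) (e n x) * f x ∂μ := by
    intro n
    rw [MeasureTheory.L2.inner_def]
    simp only [RCLike.inner_apply]
    refine integral_congr_ae ?_
    filter_upwards [(mem_e n).coeFn_toLp, hf.coeFn_toLp] with x h1 h2
    rw [h1, h2, mul_comm]
  have hWW : ∀ i j : ℤ, @inner ℂ _ _ (W i) (W j)
      = if i = j then ((2*Real.pi : ℝ) : ℂ) else 0 := by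
    intro i j
    have hpt : ∀ x : ℝ, (starRingEnd ℂ) (e i x) * e j x
        = Complex.exp (Complex.I * ((j:ℂ) - i) * x) := by
      intro x
      rw [he]
      simp only
      rw [← Complex.exp_conj, ← Complex.exp_add]
      congr 1
      simp only [map_mul, Complex.conj_I, Complex.conj_ofReal, map_intCast]
      ring
    have hint : @inner ℂ _ _ (W i) (W j)
        = ∫ x, Complex.exp (Complex.I * ((j:ℂ) - i) * x) ∂μ := by
      rw [MeasureTheory.L2.inner_def]
      simp only [RCLike.inner_apply]
      refine integral_congr_ae ?_
      filter_upwards [(mem_e i).coeFn_toLp, (mem_e j).coeFn_toLp] with x h1 h2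
      rw [h1, h2, mul_comm, hpt x]
    rcases eq_or_ne i j with rfl | hne
    · rw [hint, if_pos rfl]
      have : ∀ x : ℝ, Complex.exp (Complex.I * ((i:ℂ) - i) * x) = 1 := by
        intro x; simp
      rw [integral_congr_ae (Filter.Eventually.of_forall this)]
      rw [integral_const, hμ, measureReal_def, Measure.restrict_apply_univ, Real.volume_Ioc]
      simp only [sub_zero]
      rw [ENNReal.toReal_ofReal (by linarith : (0:ℝ) ≤ 2*Real.pi)]
      rw [Complex.real_smul]
      push_cast
      ring
    · rw [hint, if_neg hne]
      have hc : Complex.I * ((j:ℂ) - i) ≠ 0 := by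
        apply mul_ne_zero Complex.I_ne_zero
        rw [sub_ne_zero]
        exact_mod_cast fun h => hne (by exact_mod_cast h.symm)
      rw [hμ, ← intervalIntegral.integral_of_le (by linarith : (0:ℝ) ≤ 2*Real.pi)]
      rw [integral_exp_mul_complex hc]
      have h1 : Complex.I * ((j:ℂ) - i) * ((2*Real.pi : ℝ):ℂ)
          = ((j - i : ℤ):ℂ) * (2*(Real.pi:ℂ)*Complex.I) := by push_cast; ring
      have h2 : Complex.I * ((j:ℂ) - i) * ((0:ℝ):ℂ) = 0 := by push_cast; ring
      rw [h1, h2, Complex.exp_int_mul_two_pi_mul_I, Complex.exp_zero, sub_self, zero_div]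
  set r : ℝ := Real.sqrt (2*Real.pi) with hr
  have hr0 : 0 < r := Real.sqrt_pos.mpr (by linarith)
  have hr2 : r ^ 2 = 2*Real.pi := Real.sq_sqrt (by linarith)
  set V : ℤ → Lp ℂ 2 μ := fun n => ((r:ℂ))⁻¹ • W n with hV
  have hVon : Orthonormal ℂ V := by
    rw [orthonormal_iff_ite]
    intro i j
    rw [hV]
    simp only
    rw [inner_smul_left, inner_smul_right, hWW i j, map_inv₀, Complex.conj_ofReal]
    rcases eq_or_ne i j with rfl | hne
    · rw [if_pos rfl, if_pos rfl]
      have : ((2*Real.pi : ℝ) : ℂ) = (r:ℂ)^2 := by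
        rw [← hr2]; push_cast; ring
      rw [this]
      have hrne : (r:ℂ) ≠ 0 := by exact_mod_cast hr0.ne'
      field_simp
    · rw [if_neg hne, if_neg hne]
      simp
  have hbessel : Summable fun n : ℤ => ‖@inner ℂ _ _ (V n) F‖ ^ 2 :=
    Orthonormal.inner_products_summable F hVon
  have hVWF : ∀ n : ℤ, @inner ℂ _ _ (W n) F = (r:ℂ) * @inner ℂ _ _ (V n) F := by
    intro n
    rw [hV]
    simp only
    rw [inner_smul_left, map_inv₀, Complex.conj_ofReal, ← mul_assoc,
      mul_inv_cancel₀ (by exact_mod_cast hr0.ne'), one_mul]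
  have hfC : ∀ n : ℤ, fCoef f n = (1/(2*(Real.pi:ℂ))) * @inner ℂ _ _ (W n) F := by
    intro n
    rw [fCoef, hWF]
    congr 1
    rw [hμ, ← intervalIntegral.integral_of_le (by linarith : (0:ℝ) ≤ 2*Real.pi)]
    refine intervalIntegral.integral_congr fun x _ => ?_
    congr 1
    rw [he]
    simp only
    rw [← Complex.exp_conj]
    congr 1
    simp only [map_mul, Complex.conj_I, Complex.conj_ofReal, map_intCast]
  have hle : ∀ n : ℤ, ‖fCoef f n‖ ^ 2 ≤ (2*Real.pi) * ‖@inner ℂ _ _ (V n) F‖ ^ 2 := by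
    intro n
    rw [hfC n, hVWF n]
    rw [norm_mul, norm_mul, mul_pow, mul_pow]
    have h1 : ‖(1/(2*(Real.pi:ℂ)))‖ = (2*Real.pi)⁻¹ := by
      rw [norm_div, norm_one,
        show (2*(Real.pi:ℂ)) = (((2*Real.pi : ℝ)):ℂ) by push_cast; ring,
        Complex.norm_real, Real.norm_of_nonneg (by linarith), one_div]
    have h2 : ‖((r:ℝ):ℂ)‖ = r := by
      rw [Complex.norm_real, Real.norm_of_nonneg hr0.le]
    rw [h1, h2, ← mul_assoc]
    have h3 : ((2*Real.pi)⁻¹)^2 * r^2 = (2*Real.pi)⁻¹ := by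
      rw [hr2]
      field_simp
    rw [h3]
    have h4 : (2*Real.pi)⁻¹ ≤ 2*Real.pi := by
      have : (1:ℝ) ≤ 2*Real.pi := by linarith [Real.pi_gt_three]
      calc (2*Real.pi)⁻¹ ≤ 1 := by
            rw [inv_le_one_iff₀]; right; exact this
        _ ≤ 2*Real.pi := this
    exact mul_le_mul_of_nonneg_right h4 (by positivity)
  exact Summable.of_nonneg_of_le (fun n => by positivity) hle (hbessel.mul_left _)

/-- For every `s ≥ 0` there is `C_s > 0` such that for every `δ > 0`:
(i) for every square-summable sequence `a : ℤ → ℂ`,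
`(∑_n ⟨n⟩^{2s} |q_δ(n)|² |a(n)|²)^{1/2} ≤ C_s δ⁻¹ (1 + δ^{−s}) (∑_n |a(n)|²)^{1/2}`;
(ii) for every `f ∈ L²(𝕋)`, the same bound holds with `a(n) = f̂(n)`. -/
theorem stmt3 (s : ℝ) (hs : 0 ≤ s) :
    ∃ C : ℝ, 0 < C ∧ ∀ δ : ℝ, 0 < δ →
      (∀ a : ℤ → ℂ, Summable (fun n : ℤ => ‖a n‖ ^ 2) →
        (∑' n : ℤ, (1 + (n : ℝ) ^ 2) ^ s * qSym δ n ^ 2 * ‖a n‖ ^ 2) ^ ((1 : ℝ) / 2) ≤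
          C * δ⁻¹ * (1 + δ ^ (-s)) * (∑' n : ℤ, ‖a n‖ ^ 2) ^ ((1 : ℝ) / 2)) ∧
      (∀ f : ℝ → ℂ, Function.Periodic f (2 * Real.pi) →
        MeasureTheory.MemLp f 2
          (MeasureTheory.volume.restrict (Set.Ioc (0 : ℝ) (2 * Real.pi))) →
        (∑' n : ℤ, (1 + (n : ℝ) ^ 2) ^ s * qSym δ n ^ 2 * ‖fCoef f n‖ ^ 2) ^ ((1 : ℝ) / 2) ≤
          C * δ⁻¹ * (1 + δ ^ (-s)) * (∑' n : ℤ, ‖fCoef f n‖ ^ 2) ^ ((1 : ℝ) / 2)) := by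
  refine ⟨((Nat.ceil s + 1 : ℕ).factorial : ℝ), by positivity, fun δ hδ => ?_⟩
  exact ⟨fun a ha => part1 s hs hδ a ha,
    fun f _ hf => part1 s hs hδ (fCoef f) (fCoef_summable hf)⟩
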